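/- Let m ≥ 2 be an integer and let c(θ) be a monic-up-to-scalar polynomial in θ of degree m of the form c(θ) = t_m(θ^m + Λ_m θ^{m-1} + ...) with t_m ≠ 0 and Λ_m = m(49-m^2)/12. If m ≥ 8, then c has at least one root θ ∈ ℂ \ {0, (1-m^2)/4}. -/

import Mathlib

/-- Let m ≥ 8 and let c(θ) = t_m(θ^m + Λ_m θ^{m-1} + ...) be a degree-m
polynomial with t_m ≠ 0 and Λ_m = m(49-m²)/12.  Then c has a root
θ ∈ ℂ \ {0, (1-m²)/4}. -/
theorem root_exists (m : ℕ) (hm : 8 ≤ m) (c : Polynomial ℂ) (tm : ℂ) (htm : tm ≠ 0)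
    (hdeg : c.natDegree = m)
    (hlead : c.coeff m = tm)
    (hnext : c.coeff (m - 1) = tm * ((m : ℂ) * (49 - (m : ℂ) ^ 2) / 12)) :
    ∃ θ : ℂ, c.eval θ = 0 ∧ θ ≠ 0 ∧ θ ≠ (1 - (m : ℂ) ^ 2) / 4 := by
  by_contra h
  push_neg at h
  have hc0 : c ≠ 0 := by
    intro hc
    apply htm
    rw [← hlead, hc, Polynomial.coeff_zero]
  set p := Polynomial.C tm⁻¹ * c with hp
  have hpdeg : p.natDegree = m := by
    rw [hp, Polynomial.natDegree_C_mul (inv_ne_zero htm), hdeg]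
  have hmonic : p.Monic := by
    unfold Polynomial.Monic Polynomial.leadingCoeff
    rw [hpdeg, hp, Polynomial.coeff_C_mul, hlead, inv_mul_cancel₀ htm]
  have hsplit : p.Splits := IsAlgClosed.splits p
  have hsum := hsplit.nextCoeff_eq_neg_sum_roots_of_monic hmonic
  have hnextp : p.nextCoeff = (m : ℂ) * (49 - (m : ℂ) ^ 2) / 12 := by
    rw [Polynomial.nextCoeff_of_natDegree_pos (by omega : 0 < p.natDegree), hpdeg,
      hp, Polynomial.coeff_C_mul, hnext, ← mul_assoc, inv_mul_cancel₀ htm, one_mul]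
  -- every root of p has nonpositive real part
  have hroots : ∀ r ∈ p.roots, r.re ≤ 0 := by
    intro r hr
    have hr' : Polynomial.eval r c = 0 := by
      have hrp : Polynomial.eval r p = 0 := (Polynomial.mem_roots hmonic.ne_zero).mp hr
      rw [hp] at hrp
      simpa [Polynomial.eval_mul, inv_ne_zero htm] using hrp
    rcases eq_or_ne r 0 with h0 | h0
    · simp [h0]
    · have := h r hr' h0
      rw [this]
      have heq : ((1 - (m:ℂ)^2)/4) = (((1 - (m:ℝ)^2)/4 : ℝ) : ℂ) := by push_cast; ring
      rw [heq, Complex.ofReal_re]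
      have hm' : (8:ℝ) ≤ (m:ℝ) := by exact_mod_cast hm
      nlinarith
  have hre : (p.roots.sum).re ≤ 0 := by
    have : (p.roots.sum).re = (p.roots.map Complex.re).sum := by
      rw [← Complex.coe_reAddGroupHom]
      exact map_multiset_sum Complex.reAddGroupHom p.roots
    rw [this]
    have h0 : 0 ≤ ((p.roots.map Complex.re).map Neg.neg).sum := by
      refine Multiset.sum_nonneg ?_
      intro x hx
      obtain ⟨y, hy, rfl⟩ := Multiset.mem_map.mp hx
      obtain ⟨r, hr, rfl⟩ := Multiset.mem_map.mp hy
      simpa using hroots r hr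
    rw [Multiset.sum_map_neg'] at h0
    linarith
  rw [show p.roots.sum = -p.nextCoeff from by rw [hsum]; ring, hnextp] at hre
  have hΛre : ((m : ℂ) * (49 - (m : ℂ) ^ 2) / 12).re = (m:ℝ) * (49 - (m:ℝ)^2)/12 := by
    have : ((m : ℂ) * (49 - (m : ℂ) ^ 2) / 12) = (((m:ℝ) * (49 - (m:ℝ)^2)/12 : ℝ) : ℂ) := by
      push_cast; ring
    rw [this, Complex.ofReal_re]
  rw [Complex.neg_re, hΛre] at hre
  have hm' : (8:ℝ) ≤ (m:ℝ) := by exact_mod_cast hm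
  nlinarith
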